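/- Extractors for normalized states work for subnormalized states: Let n, d, m, k be natural numbers with k + 1 ≤ n. If Ext : {0,1}^n × {0,1}^d → {0,1}^m is a quantum-proof (k, ε)-strong extractor for normalized states, then Ext is a quantum-proof (k+1, 2ε)-strong extractor for subnormalized states. -/

import Mathlib

noncomputable section
open Matrix
open scoped ComplexOrder

/-- The guessing probability p_guess(X|E)_ρ: supremum over POVMs (Γ_x)_x of ∑_x tr(Γ_x ρ_x). -/
def pGuess {X E : Type*} [Fintype X] [Fintype E] [DecidableEq E]
    (ρ : X → Matrix E E ℂ) : ℝ :=
  sSup {p : ℝ | ∃ Γ : X → Matrix E E ℂ,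
    (∀ x, (Γ x).PosSemidef) ∧ (∑ x, Γ x = 1) ∧ p = ∑ x, ((Γ x * ρ x).trace).re}

/-- The trace norm ‖A‖₁ = tr √(A†A) of a square complex matrix. -/
def traceNorm {E : Type*} [Fintype E] [DecidableEq E] (A : Matrix E E ℂ) : ℝ :=
  ((Matrix.posSemidef_conjTranspose_mul_self A).1.eigenvectorUnitary.1 *
      diagonal (((↑) : ℝ → ℂ) ∘ (√·) ∘ (Matrix.posSemidef_conjTranspose_mul_self A).1.eigenvalues) *
      (star (Matrix.posSemidef_conjTranspose_mul_self A).1.eigenvectorUnitary :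
        Matrix E E ℂ)).trace.re

/-- The extractor error of Ext on the cq state ρ:
½ ∑_z ∑_s ‖ 2^{-d} ∑_{x : Ext(x,z)=s} ρ_x − 2^{-d-m} ρ_E ‖₁ with ρ_E = ∑_x ρ_x. -/
def extractorError {n d m dE : ℕ}
    (Ext : (Fin n → Bool) → (Fin d → Bool) → (Fin m → Bool))
    (ρ : (Fin n → Bool) → Matrix (Fin dE) (Fin dE) ℂ) : ℝ :=
  (1 / 2) * ∑ z : Fin d → Bool, ∑ s : Fin m → Bool,
    traceNorm (((2 : ℂ) ^ d)⁻¹ • (∑ x ∈ Finset.univ.filter fun x => Ext x z = s, ρ x)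
      - ((2 : ℂ) ^ (d + m))⁻¹ • ∑ x, ρ x)

/-- Ext is a quantum-proof (k,ε)-strong extractor for subnormalized states. -/
def IsQProofStrongExtractorSub {n d m : ℕ}
    (Ext : (Fin n → Bool) → (Fin d → Bool) → (Fin m → Bool)) (k ε : ℝ) : Prop :=
  ∀ (dE : ℕ) (ρ : (Fin n → Bool) → Matrix (Fin dE) (Fin dE) ℂ),
    (∀ x, (ρ x).PosSemidef) → (∑ x, (ρ x).trace.re ≤ 1) →
    pGuess ρ ≤ (2 : ℝ) ^ (-k) → extractorError Ext ρ ≤ ε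

/-- Ext is a quantum-proof (k,ε)-strong extractor for normalized states. -/
def IsQProofStrongExtractorNorm {n d m : ℕ}
    (Ext : (Fin n → Bool) → (Fin d → Bool) → (Fin m → Bool)) (k ε : ℝ) : Prop :=
  ∀ (dE : ℕ) (ρ : (Fin n → Bool) → Matrix (Fin dE) (Fin dE) ℂ),
    (∀ x, (ρ x).PosSemidef) → (∑ x, (ρ x).trace.re = 1) →
    pGuess ρ ≤ (2 : ℝ) ^ (-k) → extractorError Ext ρ ≤ ε

section SqrtAPI
open scoped MatrixOrder

namespace Matrix.PosSemidef
variable {E : Type*} [Fintype E] [DecidableEq E] {A : Matrix E E ℂ}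

def sqrt (hA : A.PosSemidef) : Matrix E E ℂ :=
  hA.1.eigenvectorUnitary.1 * diagonal (((↑) : ℝ → ℂ) ∘ (√·) ∘ hA.1.eigenvalues) *
    (star hA.1.eigenvectorUnitary : Matrix E E ℂ)

lemma sqrt_eq_cfc_sqrt (hA : A.PosSemidef) : hA.sqrt = CFC.sqrt A := by
  rw [CFC.sqrt_eq_cfc, cfc_nnreal_eq_real _ A, hA.1.cfc_eq, IsHermitian.cfc, Unitary.conjStarAlgAut_apply,
    sqrt]
  congr 3
  funext i
  simp [Real.coe_sqrt, Real.coe_toNNReal', hA.eigenvalues_nonneg i]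

lemma posSemidef_sqrt (hA : A.PosSemidef) : hA.sqrt.PosSemidef := by
  rw [sqrt_eq_cfc_sqrt]; exact (CFC.sqrt_nonneg A).posSemidef

lemma sq_sqrt (hA : A.PosSemidef) : hA.sqrt ^ 2 = A := by
  rw [sqrt_eq_cfc_sqrt]; exact CFC.sq_sqrt A hA.nonneg

lemma sqrt_mul_self (hA : A.PosSemidef) : hA.sqrt * hA.sqrt = A := by
  rw [sqrt_eq_cfc_sqrt]; exact CFC.sqrt_mul_sqrt_self A hA.nonneg

lemma eq_sqrt_of_sq_eq {B : Matrix E E ℂ} (hB : B.PosSemidef) (hA : A.PosSemidef)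
    (hsq : B ^ 2 = A) : B = hA.sqrt := by
  rw [sqrt_eq_cfc_sqrt, ← hsq, CFC.sqrt_sq B hB.nonneg]

end Matrix.PosSemidef

lemma traceNorm_eq {E : Type*} [Fintype E] [DecidableEq E] (A : Matrix E E ℂ) :
    traceNorm A = (Matrix.posSemidef_conjTranspose_mul_self A).sqrt.trace.re := rfl

end SqrtAPI

section Helpers

variable {X E F G : Type*} [Fintype X] [Fintype E] [DecidableEq E] [Fintype F] [DecidableEq F]
  [Fintype G] [DecidableEq G]

lemma psd_trace_re_nonneg {M : Matrix E E ℂ} (hM : M.PosSemidef) : 0 ≤ M.trace.re := by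
  rw [Matrix.trace, Complex.re_sum]
  refine Finset.sum_nonneg fun i _ => ?_
  have := hM.re_dotProduct_nonneg (Pi.single i 1)
  simpa [Matrix.mulVec_single, Matrix.diag, dotProduct, Pi.single_apply] using this

lemma traceNorm_nonneg' (A : Matrix E E ℂ) : 0 ≤ traceNorm A :=
  psd_trace_re_nonneg (Matrix.posSemidef_conjTranspose_mul_self A).posSemidef_sqrt

omit [DecidableEq E] [DecidableEq F] in
lemma trace_submatrix_equiv (e : F ≃ E) (A : Matrix E E ℂ) :
    (A.submatrix e e).trace = A.trace := by
  rw [Matrix.trace, Matrix.trace, ← Equiv.sum_comp e]; rfl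

lemma traceNorm_submatrix_equiv (e : F ≃ E) (A : Matrix E E ℂ) :
    traceNorm (A.submatrix e e) = traceNorm A := by
  have hA := Matrix.posSemidef_conjTranspose_mul_self A
  have hkey : (A.submatrix e e)ᴴ * (A.submatrix e e) = (Aᴴ * A).submatrix e e := by
    rw [Matrix.conjTranspose_submatrix, Matrix.submatrix_mul_equiv]
  have hsq : (hA.sqrt.submatrix e e) ^ 2 = (A.submatrix e e)ᴴ * (A.submatrix e e) := by
    rw [hkey, pow_two, Matrix.submatrix_mul_equiv, ← pow_two, hA.sq_sqrt]
  have := (hA.posSemidef_sqrt.submatrix e).eq_sqrt_of_sq_eq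
    (Matrix.posSemidef_conjTranspose_mul_self (A.submatrix e e)) hsq
  rw [traceNorm_eq, ← this, trace_submatrix_equiv, traceNorm_eq]

omit [DecidableEq E] [DecidableEq F] in
lemma posSemidef_fromBlocks {A : Matrix E E ℂ} {B : Matrix F F ℂ}
    (hA : A.PosSemidef) (hB : B.PosSemidef) :
    (Matrix.fromBlocks A 0 0 B).PosSemidef := by
  refine Matrix.PosSemidef.of_dotProduct_mulVec_nonneg ?_ ?_
  · rw [Matrix.IsHermitian, Matrix.fromBlocks_conjTranspose]
    simp [hA.1.eq, hB.1.eq]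
  · intro x
    have : star x ⬝ᵥ (Matrix.fromBlocks A 0 0 B) *ᵥ x
        = star (x ∘ Sum.inl) ⬝ᵥ A *ᵥ (x ∘ Sum.inl) + star (x ∘ Sum.inr) ⬝ᵥ B *ᵥ (x ∘ Sum.inr) := by
      simp [dotProduct, Fintype.sum_sum_type, Matrix.fromBlocks_mulVec, Matrix.mulVec,
        Function.comp]
    rw [this]
    exact add_nonneg (hA.dotProduct_mulVec_nonneg _) (hB.dotProduct_mulVec_nonneg _)

omit [DecidableEq E] [DecidableEq F] in
lemma trace_fromBlocks (A : Matrix E E ℂ) (B : Matrix E F ℂ)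
    (C : Matrix F E ℂ) (D : Matrix F F ℂ) :
    (Matrix.fromBlocks A B C D).trace = A.trace + D.trace := by
  simp [Matrix.trace, Fintype.sum_sum_type, Matrix.diag]

lemma traceNorm_fromBlocks (A : Matrix E E ℂ) (B : Matrix F F ℂ) :
    traceNorm (Matrix.fromBlocks A 0 0 B) = traceNorm A + traceNorm B := by
  have hA := Matrix.posSemidef_conjTranspose_mul_self A
  have hB := Matrix.posSemidef_conjTranspose_mul_self B
  have hkey : (Matrix.fromBlocks A 0 0 B)ᴴ * (Matrix.fromBlocks A 0 0 B)
      = Matrix.fromBlocks (Aᴴ * A) 0 0 (Bᴴ * B) := by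
    rw [Matrix.fromBlocks_conjTranspose, Matrix.fromBlocks_multiply]
    simp
  have hsq : (Matrix.fromBlocks hA.sqrt 0 0 hB.sqrt) ^ 2
      = (Matrix.fromBlocks A 0 0 B)ᴴ * (Matrix.fromBlocks A 0 0 B) := by
    rw [hkey, pow_two, Matrix.fromBlocks_multiply]
    simp [hA.sqrt_mul_self, hB.sqrt_mul_self]
  have := (posSemidef_fromBlocks hA.posSemidef_sqrt hB.posSemidef_sqrt).eq_sqrt_of_sq_eq
    (Matrix.posSemidef_conjTranspose_mul_self (Matrix.fromBlocks A 0 0 B)) hsq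
  rw [traceNorm_eq, ← this, trace_fromBlocks, Complex.add_re, traceNorm_eq, traceNorm_eq]

lemma psd_trace_mul_re_nonneg {A B : Matrix E E ℂ} (hA : A.PosSemidef) (hB : B.PosSemidef) :
    0 ≤ (A * B).trace.re := by
  have h1 : A * B = hA.sqrt * (hA.sqrt * B) := by rw [← mul_assoc, hA.sqrt_mul_self]
  rw [h1, Matrix.trace_mul_comm]
  have h2 : hA.sqrt * B * hA.sqrt = hA.sqrtᴴ * B * hA.sqrt := by
    rw [hA.posSemidef_sqrt.isHermitian.eq]
  have h3 := hB.conjTranspose_mul_mul_same hA.sqrt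
  rw [← h2] at h3
  exact psd_trace_re_nonneg h3

omit [DecidableEq E] in
lemma psd_sum {ι : Type*} (s : Finset ι) (f : ι → Matrix E E ℂ)
    (h : ∀ i ∈ s, (f i).PosSemidef) : (∑ i ∈ s, f i).PosSemidef := by
  classical
  induction s using Finset.induction_on with
  | empty => simpa using Matrix.PosSemidef.zero
  | insert _ _ hx ih =>
    rw [Finset.sum_insert hx]
    exact ((h _ (Finset.mem_insert_self _ _)).add
      (ih fun i hi => h i (Finset.mem_insert_of_mem hi)))

lemma povm_trace_le {Γ ρ : Matrix E E ℂ} (hρ : ρ.PosSemidef) (hΓc : (1 - Γ).PosSemidef) :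
    ((Γ * ρ).trace).re ≤ ρ.trace.re := by
  have h := psd_trace_mul_re_nonneg hΓc hρ
  rw [Matrix.sub_mul, Matrix.one_mul, Matrix.trace_sub, Complex.sub_re] at h
  linarith

lemma povm_compl_psd (Γ : X → Matrix E E ℂ) (hpsd : ∀ x, (Γ x).PosSemidef)
    (hsum : ∑ x, Γ x = 1) (x : X) : (1 - Γ x).PosSemidef := by
  classical
  have : (1 : Matrix E E ℂ) - Γ x = ∑ y ∈ Finset.univ.erase x, Γ y := by
    rw [← hsum, ← Finset.add_sum_erase _ _ (Finset.mem_univ x)]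
    abel
  rw [this]
  exact psd_sum _ _ fun i _ => hpsd i

lemma pGuess_bddAbove (ρ : X → Matrix E E ℂ) (hρ : ∀ x, (ρ x).PosSemidef) :
    BddAbove {p : ℝ | ∃ Γ : X → Matrix E E ℂ,
      (∀ x, (Γ x).PosSemidef) ∧ (∑ x, Γ x = 1) ∧ p = ∑ x, ((Γ x * ρ x).trace).re} := by
  refine ⟨∑ x, (ρ x).trace.re, fun p hp => ?_⟩
  obtain ⟨Γ, hpsd, hsum, rfl⟩ := hp
  exact Finset.sum_le_sum fun x _ =>
    povm_trace_le (hρ x) (povm_compl_psd Γ hpsd hsum x)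

lemma le_pGuess (ρ : X → Matrix E E ℂ) (hρ : ∀ x, (ρ x).PosSemidef)
    (Γ : X → Matrix E E ℂ) (hpsd : ∀ x, (Γ x).PosSemidef) (hsum : ∑ x, Γ x = 1) :
    ∑ x, ((Γ x * ρ x).trace).re ≤ pGuess ρ :=
  le_csSup (pGuess_bddAbove ρ hρ) ⟨Γ, hpsd, hsum, rfl⟩

lemma psd_real_smul_one {c : ℝ} (hc : 0 ≤ c) :
    (((c : ℂ)) • (1 : Matrix F F ℂ)).PosSemidef := by
  have : ((c : ℂ)) • (1 : Matrix F F ℂ) = Matrix.diagonal (fun _ => (c : ℂ)) := by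
    ext i j
    by_cases h : i = j <;>
      simp [Matrix.one_apply, Matrix.diagonal_apply, h]
  rw [this]
  exact Matrix.PosSemidef.diagonal fun i => by
    simpa using (Complex.zero_le_real).mpr hc

lemma extractorError_nonneg {n d m dE : ℕ}
    (Ext : (Fin n → Bool) → (Fin d → Bool) → (Fin m → Bool))
    (ρ : (Fin n → Bool) → Matrix (Fin dE) (Fin dE) ℂ) :
    0 ≤ extractorError Ext ρ := by
  refine mul_nonneg (by norm_num) <| Finset.sum_nonneg fun z _ =>
    Finset.sum_nonneg fun s _ => traceNorm_nonneg' _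

end Helpers

/-- ε is nonnegative for a normalized-state extractor (k ≤ n). -/
lemma eps_nonneg {n d m : ℕ} (k : ℕ) (hk : k ≤ n) (ε : ℝ)
    (Ext : (Fin n → Bool) → (Fin d → Bool) → (Fin m → Bool))
    (hExt : IsQProofStrongExtractorNorm Ext (k : ℝ) ε) : 0 ≤ ε := by
  set r : ℝ := ((2 : ℝ) ^ n)⁻¹ with hr
  have hrpos : 0 < r := by positivity
  set u : (Fin n → Bool) → Matrix (Fin 1) (Fin 1) ℂ :=
    fun _ => ((r : ℂ)) • (1 : Matrix (Fin 1) (Fin 1) ℂ) with hu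
  have hupsd : ∀ x, (u x).PosSemidef := fun _ => psd_real_smul_one hrpos.le
  have hcard : (Fintype.card (Fin n → Bool) : ℝ) = 2 ^ n := by
    simp [Fintype.card_fun]
  have hutr : ∀ x, (u x).trace.re = r := by
    intro x
    simp [hu, Matrix.trace_smul, Matrix.trace_one]
  have hnorm : ∑ x, (u x).trace.re = 1 := by
    calc ∑ x, (u x).trace.re = ∑ _x : Fin n → Bool, r :=
          Finset.sum_congr rfl fun x _ => hutr x
      _ = 1 := by
          rw [Finset.sum_const, Finset.card_univ, nsmul_eq_mul, hcard, hr]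
          field_simp
  have hpow : r ≤ (2 : ℝ) ^ (-(k : ℝ)) := by
    rw [hr, ← Real.rpow_natCast 2 n, ← Real.rpow_neg (by norm_num)]
    exact Real.rpow_le_rpow_left_iff (by norm_num : (1:ℝ) < 2) |>.mpr
      (neg_le_neg (by exact_mod_cast hk))
  have hpg : pGuess u ≤ (2 : ℝ) ^ (-(k : ℝ)) := by
    refine Real.sSup_le ?_ (Real.rpow_nonneg (by norm_num) _)
    rintro p ⟨Γ, hpsd, hsum, rfl⟩
    have : ∀ x, ((Γ x * u x).trace).re = r * (Γ x).trace.re := by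
      intro x
      rw [hu]
      simp only [Matrix.mul_smul, Matrix.trace_smul, Matrix.mul_one, smul_eq_mul,
        Complex.re_ofReal_mul]
    calc ∑ x, ((Γ x * u x).trace).re = r * ∑ x, (Γ x).trace.re := by
          simp only [this]; rw [Finset.mul_sum]
      _ = r * ((∑ x, Γ x).trace).re := by rw [Matrix.trace_sum, Complex.re_sum]
      _ = r := by rw [hsum]; simp [Matrix.trace_one]
      _ ≤ _ := hpow
  have := hExt 1 u hupsd hnorm hpg
  exact le_trans (extractorError_nonneg Ext u) this

/-- Extractors for normalized states work for subnormalized states: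
a quantum-proof (k,ε)-strong extractor for normalized states is a
quantum-proof (k+1,2ε)-strong extractor for subnormalized states. -/
theorem extractor_norm_to_sub {n d m : ℕ} (k : ℕ) (hk : k + 1 ≤ n) (ε : ℝ)
    (Ext : (Fin n → Bool) → (Fin d → Bool) → (Fin m → Bool))
    (hExt : IsQProofStrongExtractorNorm Ext (k : ℝ) ε) :
    IsQProofStrongExtractorSub Ext ((k : ℝ) + 1) (2 * ε) := by
  have hε0 : 0 ≤ ε := eps_nonneg k (by omega) ε Ext hExt
  intro dE ρ hρ hsub hpg
  set t : ℝ := ∑ x, (ρ x).trace.re with ht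
  have ht0 : 0 ≤ t := Finset.sum_nonneg fun x _ => psd_trace_re_nonneg (hρ x)
  set c : ℝ := (1 - t) / 2 ^ n with hc
  have hc0 : 0 ≤ c := div_nonneg (by linarith) (by positivity)
  set e : Fin dE ⊕ Fin 1 ≃ Fin (dE + 1) := finSumFinEquiv with he
  set ω : Matrix (Fin 1) (Fin 1) ℂ := ((c : ℂ)) • 1 with hω
  have hωpsd : ω.PosSemidef := psd_real_smul_one hc0
  set ρ' : (Fin n → Bool) → Matrix (Fin (dE + 1)) (Fin (dE + 1)) ℂ :=
    fun x => (Matrix.fromBlocks (ρ x) 0 0 ω).submatrix e.symm e.symm with hρ'def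
  have hρ'psd : ∀ x, (ρ' x).PosSemidef :=
    fun x => (posSemidef_fromBlocks (hρ x) hωpsd).submatrix _
  have hωtr : ω.trace.re = c := by simp [hω, Matrix.trace_smul, Matrix.trace_one]
  have hcard : (Fintype.card (Fin n → Bool) : ℝ) = 2 ^ n := by simp [Fintype.card_fun]
  have hρ'tr : ∀ x, (ρ' x).trace.re = (ρ x).trace.re + c := by
    intro x
    rw [hρ'def]
    simp only [trace_submatrix_equiv, trace_fromBlocks, Complex.add_re, hωtr]
  have hnorm : ∑ x, (ρ' x).trace.re = 1 := by
    simp only [hρ'tr, Finset.sum_add_distrib, Finset.sum_const, Finset.card_univ,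
      nsmul_eq_mul, ← ht]
    rw [hcard, hc]
    field_simp
    ring
  -- rpow arithmetic
  have hhalf : (2:ℝ) ^ (-((k:ℝ)+1)) + (2:ℝ) ^ (-((k:ℝ)+1)) = (2:ℝ) ^ (-(k:ℝ)) := by
    rw [show -((k:ℝ)+1) = -(k:ℝ) + (-1) by ring, Real.rpow_add (by norm_num),
      Real.rpow_neg_one]
    ring
  have hcle : c ≤ (2:ℝ) ^ (-((k:ℝ)+1)) := by
    have h1 : c ≤ ((2:ℝ) ^ n)⁻¹ := by
      rw [hc, div_eq_mul_inv]
      nlinarith [inv_nonneg.mpr (le_of_lt (show (0:ℝ) < 2^n by positivity)),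
        (show (0:ℝ) < 2^n by positivity)]
    refine le_trans h1 ?_
    rw [← Real.rpow_natCast 2 n, ← Real.rpow_neg (by norm_num)]
    refine (Real.rpow_le_rpow_left_iff (by norm_num : (1:ℝ) < 2)).mpr ?_
    have : (k:ℝ) + 1 ≤ (n:ℝ) := by exact_mod_cast hk
    linarith
  -- pGuess bound for ρ'
  have hpg' : pGuess ρ' ≤ (2:ℝ) ^ (-(k:ℝ)) := by
    refine Real.sSup_le ?_ (Real.rpow_nonneg (by norm_num) _)
    rintro p ⟨Γ, hΓpsd, hΓsum, rfl⟩
    set Δ : (Fin n → Bool) → Matrix (Fin dE ⊕ Fin 1) (Fin dE ⊕ Fin 1) ℂ :=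
      fun x => (Γ x).submatrix e e with hΔ
    have hΔsum : ∑ x, Δ x = 1 := by
      have : ∑ x, Δ x = (∑ x, Γ x).submatrix e e := by
        ext i j; simp [hΔ, Matrix.sum_apply]
      rw [this, hΓsum, Matrix.submatrix_one_equiv]
    set B1 : (Fin n → Bool) → Matrix (Fin dE) (Fin dE) ℂ :=
      fun x => (Δ x).submatrix Sum.inl Sum.inl with hB1
    set B2 : (Fin n → Bool) → Matrix (Fin 1) (Fin 1) ℂ :=
      fun x => (Δ x).submatrix Sum.inr Sum.inr with hB2
    have hB1psd : ∀ x, (B1 x).PosSemidef := fun x => ((hΓpsd x).submatrix _).submatrix _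
    have hB2psd : ∀ x, (B2 x).PosSemidef := fun x => ((hΓpsd x).submatrix _).submatrix _
    have hB1sum : ∑ x, B1 x = 1 := by
      have : ∑ x, B1 x = (∑ x, Δ x).submatrix Sum.inl Sum.inl := by
        ext i j; simp [hB1, Matrix.sum_apply]
      rw [this, hΔsum]
      ext i j
      simp [Matrix.one_apply, Sum.inl.injEq]
    have hB2sum : ∑ x, B2 x = 1 := by
      have : ∑ x, B2 x = (∑ x, Δ x).submatrix Sum.inr Sum.inr := by
        ext i j; simp [hB2, Matrix.sum_apply]
      rw [this, hΔsum]
      ext i j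
      simp [Matrix.one_apply, Sum.inr.injEq]
    have htrace : ∀ x, ((Γ x * ρ' x).trace)
        = ((B1 x * ρ x).trace) + ((B2 x * ω).trace) := by
      intro x
      have hΓx : Γ x = (Δ x).submatrix e.symm e.symm := by
        rw [hΔ]; ext i j; simp
      rw [hΓx, hρ'def]
      rw [Matrix.submatrix_mul_equiv, trace_submatrix_equiv]
      conv_lhs => rw [← Matrix.fromBlocks_toBlocks (Δ x)]
      rw [Matrix.fromBlocks_multiply, trace_fromBlocks]
      simp only [Matrix.mul_zero, Matrix.zero_mul, add_zero, zero_add]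
      rfl
    have hsplit : ∑ x, ((Γ x * ρ' x).trace).re
        = (∑ x, ((B1 x * ρ x).trace).re) + ∑ x, ((B2 x * ω).trace).re := by
      rw [← Finset.sum_add_distrib]
      exact Finset.sum_congr rfl fun x _ => by rw [htrace x, Complex.add_re]
    have hterm1 : ∑ x, ((B1 x * ρ x).trace).re ≤ pGuess ρ :=
      le_pGuess ρ hρ B1 hB1psd hB1sum
    have hterm2 : ∑ x, ((B2 x * ω).trace).re = c := by
      have : ∀ x, ((B2 x * ω).trace).re = c * (B2 x).trace.re := by
        intro x
        rw [hω]
        simp only [Matrix.mul_smul, Matrix.trace_smul, Matrix.mul_one, smul_eq_mul,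
          Complex.re_ofReal_mul]
      simp only [this, ← Finset.mul_sum]
      rw [← Complex.re_sum, ← Matrix.trace_sum, hB2sum]
      simp [Matrix.trace_one]
    rw [hsplit, hterm2]
    calc (∑ x, ((B1 x * ρ x).trace).re) + c
        ≤ (2:ℝ) ^ (-((k:ℝ)+1)) + (2:ℝ) ^ (-((k:ℝ)+1)) :=
          add_le_add (le_trans hterm1 hpg) hcle
      _ = (2:ℝ) ^ (-(k:ℝ)) := hhalf
  -- error comparison
  have hLkey : ∀ (S : Finset (Fin n → Bool)) (a b : ℂ),
      a • (∑ x ∈ S, ρ' x) - b • (∑ x, ρ' x)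
      = (Matrix.fromBlocks (a • (∑ x ∈ S, ρ x) - b • (∑ x, ρ x)) 0 0
          (a • (((S.card : ℂ)) • ω) - b • (((Fintype.card (Fin n → Bool) : ℂ)) • ω))).submatrix
          e.symm e.symm := by
    intro S a b
    ext i j
    rcases hqi : e.symm i with i1 | i1 <;> rcases hqj : e.symm j with j1 | j1 <;>
      simp [hρ'def, Matrix.sum_apply, hqi, hqj, Finset.mul_sum, Matrix.submatrix_apply,
        Finset.sum_const, nsmul_eq_mul, Finset.card_univ, mul_assoc]
  have herr : extractorError Ext ρ ≤ extractorError Ext ρ' := by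
    rw [extractorError, extractorError]
    refine mul_le_mul_of_nonneg_left ?_ (by norm_num)
    refine Finset.sum_le_sum fun z _ => Finset.sum_le_sum fun s _ => ?_
    rw [hLkey _ _ _, traceNorm_submatrix_equiv, traceNorm_fromBlocks]
    exact le_add_of_nonneg_right (traceNorm_nonneg' _)
  have := hExt (dE + 1) ρ' hρ'psd hnorm hpg'
  linarith


end
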